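/- Let (X, μ) be a standard Borel probability space and let φ be an ergodic measure-preserving flow on (X, μ). Then for Lebesgue-almost every s ∈ ℝ, the product flow Φ^s on (X × (ℝ/ℤ), μ ⊗ Lebesgue) is ergodic. -/

import Mathlib

open MeasureTheory Filter

instance : Fact ((0 : ℝ) < 1) := ⟨one_pos⟩

/-- A flow is ergodic if every measurable set that is invariant (up to null sets)
under every time-`t` map has measure `0` or `1`. -/
def FlowErgodic {X : Type*} [MeasurableSpace X] (μ : Measure X) (φ : ℝ → X → X) : Prop :=
  ∀ A : Set X, MeasurableSet A → (∀ t : ℝ, φ t ⁻¹' A =ᵐ[μ] A) → μ A = 0 ∨ μ A = 1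

section Aux
open Set Complex AddCircle
open scoped ENNReal


theorem aux_const {X : Type*} [MeasurableSpace X] (μ : Measure X) [IsProbabilityMeasure μ]
    (g : X → ℝ) (hg : Measurable g)
    (htriv : ∀ a : ℝ, μ {x | a < g x} = 0 ∨ μ {x | a < g x} = 1) :
    ∃ κ : ℝ, g =ᵐ[μ] fun _ => κ := by
  set S : Set ℝ := {a : ℝ | μ {x | a < g x} = 0} with hS
  have hmeas : ∀ a : ℝ, MeasurableSet {x | a < g x} := fun a =>
    measurableSet_lt measurable_const hg
  -- S is nonempty
  have hne : S.Nonempty := by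
    by_contra h
    rw [Set.not_nonempty_iff_eq_empty] at h
    have h1 : ∀ n : ℕ, μ {x | (n : ℝ) < g x} = 1 := by
      intro n
      rcases htriv n with h0 | h1
      · exact absurd (Set.eq_empty_iff_forall_notMem.mp h n h0) (fun h => h)
      · exact h1
    have hanti : Antitone fun n : ℕ => {x | (n : ℝ) < g x} := by
      intro m n hmn x hx
      exact lt_of_le_of_lt (show (m:ℝ) ≤ n from Nat.cast_le.mpr hmn) hx
    have hint : ⋂ n : ℕ, {x | (n : ℝ) < g x} = ∅ := by
      ext x
      simp only [Set.mem_iInter, Set.mem_empty_iff_false, iff_false, not_forall, Set.mem_setOf_eq,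
        not_lt]
      obtain ⟨n, hn⟩ := exists_nat_ge (g x)
      exact ⟨n, by simpa using hn⟩
    have := tendsto_measure_iInter_atTop (μ := μ) (fun n => (hmeas _).nullMeasurableSet) hanti
      ⟨0, measure_ne_top _ _⟩
    rw [hint] at this
    simp only [measure_empty] at this
    have h1' : Tendsto (fun n : ℕ => μ {x | (n : ℝ) < g x}) atTop (nhds 1) := by
      simp only [h1]; exact tendsto_const_nhds
    have := tendsto_nhds_unique this h1'
    simp at this
  -- S is bounded below
  have hbdd : BddBelow S := by
    have h2 : ∃ m : ℕ, μ {x | (-(m : ℝ)) < g x} = 1 := by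
      by_contra h
      push_neg at h
      have h0 : ∀ m : ℕ, μ {x | (-(m : ℝ)) < g x} = 0 := fun m =>
        (htriv _).resolve_right (h m)
      have hmono : Monotone fun n : ℕ => {x | (-(n : ℝ)) < g x} := by
        intro m n hmn x hx
        exact lt_of_le_of_lt (neg_le_neg (show (m:ℝ) ≤ n from Nat.cast_le.mpr hmn)) hx
      have huni : ⋃ n : ℕ, {x | (-(n : ℝ)) < g x} = Set.univ := by
        ext x
        simp only [Set.mem_iUnion, Set.mem_univ, iff_true, Set.mem_setOf_eq]
        obtain ⟨n, hn⟩ := exists_nat_gt (-(g x))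
        exact ⟨n, by linarith⟩
      have h3 := tendsto_measure_iUnion_atTop (μ := μ) hmono
      rw [huni] at h3
      simp only [Function.comp_def, h0, measure_univ] at h3
      have := tendsto_nhds_unique h3 tendsto_const_nhds
      simp at this
    obtain ⟨m, hm⟩ := h2
    refine ⟨-(m : ℝ), fun a ha => ?_⟩
    by_contra hlt
    push_neg at hlt
    have hsub : {x | (-(m : ℝ)) < g x} ⊆ {x | a < g x} := fun x hx => lt_trans hlt hx
    have := measure_mono (μ := μ) hsub
    rw [hm, ha] at this
    simp at this
  set κ := sInf S with hκ
  refine ⟨κ, ?_⟩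
  have h1 : μ {x | κ < g x} = 0 := by
    have : {x | κ < g x} ⊆ ⋃ n : ℕ, {x | κ + 1/(n+1 : ℝ) < g x} := by
      intro x hx
      obtain ⟨n, hn⟩ := exists_nat_one_div_lt (show (0:ℝ) < g x - κ by simpa [sub_pos] using hx)
      simp only [Set.mem_iUnion, Set.mem_setOf_eq]
      exact ⟨n, by linarith⟩
    refine measure_mono_null this (measure_iUnion_null fun n => ?_)
    have hlt' : κ < κ + 1/(n+1 : ℝ) := by
      have : (0:ℝ) < 1/(n+1:ℝ) := by positivity
      linarith
    obtain ⟨a, haS, halt⟩ := (csInf_lt_iff hbdd hne).mp hlt'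
    exact measure_mono_null (fun x hx => lt_trans halt hx) haS
  have h2 : μ {x | g x < κ} = 0 := by
    have : {x | g x < κ} ⊆ ⋃ n : ℕ, {x | κ - 1/(n+1 : ℝ) < g x}ᶜ := by
      intro x hx
      obtain ⟨n, hn⟩ := exists_nat_one_div_lt (show (0:ℝ) < κ - g x by simpa [sub_pos] using hx)
      simp only [Set.mem_iUnion, Set.mem_compl_iff, Set.mem_setOf_eq, not_lt]
      exact ⟨n, by linarith⟩
    refine measure_mono_null this (measure_iUnion_null fun n => ?_)
    have hnot : κ - 1/(n+1 : ℝ) ∉ S := fun h => by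
      have := csInf_le hbdd h
      have : (0:ℝ) < 1/(n+1 : ℝ) := by positivity
      linarith [csInf_le hbdd h]
    have h1' : μ {x | κ - 1/(n+1 : ℝ) < g x} = 1 := (htriv _).resolve_left hnot
    rw [measure_compl (hmeas _) (measure_ne_top _ _), h1', measure_univ]
    simp
  have : μ {x | g x ≠ κ} = 0 := by
    refine measure_mono_null (fun x hx => ?_) (measure_union_null h1 h2)
    rcases lt_or_gt_of_ne (hx : g x ≠ κ) with h | h
    · exact Or.inr h
    · exact Or.inl h
  filter_upwards [measure_eq_zero_iff_ae_notMem.mp this] with x hx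
  simpa using not_not.mp (by simpa using hx)


/-- The set of eigenvalues of the flow. -/
def Eig {X : Type*} [MeasurableSpace X] (μ : Measure X) (φ : ℝ → X → X) : Set ℝ :=
  {c | ∃ f : X → ℂ, MemLp f 2 μ ∧ ¬ (f =ᵐ[μ] 0) ∧
    ∀ t : ℝ, (fun x => f (φ t x)) =ᵐ[μ]
      fun x => Complex.exp (2 * Real.pi * c * t * Complex.I) * f x}

/-- orthogonality of eigenfunctions for distinct eigenvalues -/
theorem eig_orth {X : Type*} [MeasurableSpace X] (μ : Measure X)
    (φ : ℝ → X → X) (hφpres : ∀ t : ℝ, MeasurePreserving (φ t) μ μ)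
    {c c' : ℝ} (hcc : c ≠ c') {f g : X → ℂ}
    (hf : MemLp f 2 μ) (hg : MemLp g 2 μ)
    (hef : ∀ t : ℝ, (fun x => f (φ t x)) =ᵐ[μ]
      fun x => Complex.exp (2 * Real.pi * c * t * Complex.I) * f x)
    (heg : ∀ t : ℝ, (fun x => g (φ t x)) =ᵐ[μ]
      fun x => Complex.exp (2 * Real.pi * c' * t * Complex.I) * g x) :
    ∫ x, (starRingEnd ℂ) (f x) * g x ∂μ = 0 := by
  set I0 : ℂ := ∫ x, (starRingEnd ℂ) (f x) * g x ∂μ with hI0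
  set t : ℝ := 1 / (2 * (c' - c)) with ht
  have hm : AEStronglyMeasurable (fun x => (starRingEnd ℂ) (f x) * g x) μ :=
    (Complex.continuous_conj.comp_aestronglyMeasurable hf.aestronglyMeasurable).mul
      hg.aestronglyMeasurable
  have hm' : AEStronglyMeasurable (fun x => (starRingEnd ℂ) (f x) * g x)
      (Measure.map (φ t) μ) := by rw [(hφpres t).map_eq]; exact hm
  have h1 : I0 = ∫ x, (starRingEnd ℂ) (f (φ t x)) * g (φ t x) ∂μ := by
    calc I0 = ∫ x, (starRingEnd ℂ) (f x) * g x ∂(Measure.map (φ t) μ) := by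
          rw [(hφpres t).map_eq]
      _ = _ := integral_map (hφpres t).aemeasurable hm'
  have h2 : (fun x => (starRingEnd ℂ) (f (φ t x)) * g (φ t x)) =ᵐ[μ]
      fun x => Complex.exp (2 * Real.pi * (c' - c) * t * Complex.I) *
        ((starRingEnd ℂ) (f x) * g x) := by
    filter_upwards [hef t, heg t] with x hfx hgx
    have hconj : (starRingEnd ℂ) (Complex.exp (2 * Real.pi * c * t * Complex.I)) =
        Complex.exp (-(2 * Real.pi * c * t * Complex.I)) := by
      rw [← Complex.exp_conj]
      congr 1
      simp only [map_mul, Complex.conj_I, Complex.conj_ofReal, map_ofNat]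
      ring
    rw [hfx, hgx, map_mul, hconj,
      show (2:ℂ) * Real.pi * ((c':ℂ) - (c:ℂ)) * (t:ℂ) * Complex.I
        = 2 * Real.pi * (c':ℂ) * t * Complex.I + -(2 * Real.pi * (c:ℂ) * t * Complex.I) by ring,
      Complex.exp_add]
    ring
  have key : I0 = Complex.exp (2 * Real.pi * ((c':ℂ) - (c:ℂ)) * t * Complex.I) * I0 := by
    calc I0 = ∫ x, (starRingEnd ℂ) (f (φ t x)) * g (φ t x) ∂μ := h1
      _ = Complex.exp (2 * Real.pi * ((c':ℂ) - (c:ℂ)) * t * Complex.I) * I0 := by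
          rw [integral_congr_ae h2, integral_const_mul]
  have hexp : Complex.exp (2 * Real.pi * ((c':ℂ) - (c:ℂ)) * t * Complex.I) = -1 := by
    have hne2 : ((c' : ℂ) * 2 - (c:ℂ) * 2) ≠ 0 := by
      have : ((c' : ℝ) * 2 - c * 2) ≠ 0 := by
        intro h; apply hcc; linarith
      exact_mod_cast this
    have hsub : ((c':ℂ) - c) ≠ 0 := by
      intro h
      apply hne2
      linear_combination 2 * h
    have harg : (2 : ℂ) * Real.pi * ((c':ℂ) - (c:ℂ)) * t * Complex.I
        = Real.pi * Complex.I := by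
      have htc : (t : ℂ) = 1 / (2 * ((c':ℂ) - c)) := by rw [ht]; push_cast; ring
      rw [htc]
      field_simp
    rw [harg, Complex.exp_pi_mul_I]
  rw [hexp] at key
  have h3 : (2 : ℂ) * I0 = 0 := by linear_combination key
  simpa using h3

theorem eig_countable {X : Type*} [MeasurableSpace X] [MeasurableSpace.CountablyGenerated X]
    (μ : Measure X) [IsProbabilityMeasure μ]
    (φ : ℝ → X → X) (hφpres : ∀ t : ℝ, MeasurePreserving (φ t) μ μ) :
    (Eig μ φ).Countable := by
  classical
  haveI : Fact ((1:ℝ≥0∞) ≤ 2) := ⟨by norm_num⟩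
  haveI : Fact ((2:ℝ≥0∞) ≠ ∞) := ⟨by norm_num⟩
  rw [← Set.countable_coe_iff]
  choose f hfmem hfne hfe using fun c : Eig μ φ => c.2
  set F : Eig μ φ → Lp ℂ 2 μ := fun c =>
    ((‖(hfmem c).toLp (f c)‖ : ℝ)⁻¹ : ℂ) • (hfmem c).toLp (f c) with hF
  have htoLpne : ∀ c, (hfmem c).toLp (f c) ≠ 0 := by
    intro c h
    apply hfne c
    have h1 := (MemLp.coeFn_toLp (hfmem c)).symm
    rw [h] at h1
    exact h1.trans (Lp.coeFn_zero ℂ 2 μ)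
  have hFnorm : ∀ c, ‖F c‖ = 1 := by
    intro c
    rw [hF]
    simp only [norm_smul, norm_inv, Complex.norm_real, norm_norm]
    rw [inv_mul_cancel₀ (norm_ne_zero_iff.mpr (htoLpne c))]
  have hinner : ∀ c c' : Eig μ φ, c ≠ c' → (inner ℂ (F c) (F c') : ℂ) = 0 := by
    intro c c' hne
    rw [hF]
    simp only [inner_smul_left, inner_smul_right]
    have horth : (inner ℂ ((hfmem c).toLp (f c)) ((hfmem c').toLp (f c')) : ℂ) = 0 := by
      rw [MeasureTheory.L2.inner_def]
      have : (fun a => (inner ℂ (((hfmem c).toLp (f c) : Lp ℂ 2 μ) a)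
          (((hfmem c').toLp (f c') : Lp ℂ 2 μ) a) : ℂ)) =ᵐ[μ]
          fun a => (starRingEnd ℂ) (f c a) * f c' a := by
        filter_upwards [MemLp.coeFn_toLp (hfmem c), MemLp.coeFn_toLp (hfmem c')] with a h1 h2
        rw [h1, h2, RCLike.inner_apply, mul_comm]
      rw [integral_congr_ae this]
      exact eig_orth μ φ hφpres (fun h => hne (Subtype.ext h)) (hfmem c) (hfmem c')
        (hfe c) (hfe c')
    rw [horth]
    simp
  have hdist : ∀ c c' : Eig μ φ, c ≠ c' → 1 ≤ dist (F c) (F c') := by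
    intro c c' hne
    have hsq : ‖F c - F c'‖ ^ 2 = 2 := by
      rw [@norm_sub_sq ℂ _ _ _ _ (F c) (F c'), hFnorm, hFnorm, hinner c c' hne]
      norm_num
    rw [dist_eq_norm]
    nlinarith [norm_nonneg (F c - F c')]
  refine Pairwise.countable_of_isOpen_disjoint (s := fun c => Metric.ball (F c) (1/2))
    ?_ (fun c => Metric.isOpen_ball) (fun c => Metric.nonempty_ball.2 (by norm_num))
  intro c c' hne
  apply Metric.ball_disjoint_ball
  calc (1:ℝ)/2 + 1/2 = 1 := by norm_num
    _ ≤ dist (F c) (F c') := hdist c c' hne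


lemma fourier_arg_add {T : ℝ} [Fact (0 < T)] (m : ℤ) (x y : AddCircle T) :
    fourier m (x + y) = fourier m x * fourier m y := by
  rw [fourier_apply, fourier_apply, fourier_apply, smul_add, AddCircle.toCircle_add]
  simp

lemma norm_fourier_eq_one {T : ℝ} [Fact (0 < T)] (m : ℤ) (x : AddCircle T) :
    ‖fourier m x‖ = 1 := by
  rw [fourier_apply]
  exact Circle.norm_coe _

lemma integral_fourier_eq_zero {T : ℝ} [hT : Fact (0 < T)] (m : ℤ) (hm : m ≠ 0) :
    ∫ r, fourier m r ∂(@AddCircle.haarAddCircle T hT) = 0 := by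
  have h1 := integral_add_right_eq_self (μ := @AddCircle.haarAddCircle T hT)
    (fun r => fourier m r) ((T / 2 / m : ℝ) : AddCircle T)
  simp_rw [fourier_add_half_inv_index hm hT.out] at h1
  rw [integral_neg] at h1
  have h2 : (2:ℂ) * ∫ r, fourier m r ∂(@AddCircle.haarAddCircle T hT) = 0 := by
    linear_combination -h1
  simpa using h2

end Aux

section Main
open Set Complex AddCircle
open scoped ENNReal

theorem stmt_3
    {X : Type*} [MeasurableSpace X] [StandardBorelSpace X]
    (μ : Measure X) [IsProbabilityMeasure μ]
    (φ : ℝ → X → X)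
    (hφmeas : Measurable fun p : ℝ × X => φ p.1 p.2)
    (hφ0 : φ 0 = id)
    (hφadd : ∀ s t : ℝ, φ (s + t) = φ s ∘ φ t)
    (hφpres : ∀ t : ℝ, MeasurePreserving (φ t) μ μ)
    (herg : FlowErgodic μ φ) :
    ∀ᵐ s ∂(volume : Measure ℝ),
      FlowErgodic (μ.prod (volume : Measure (AddCircle (1 : ℝ))))
        (fun t p => (φ t p.1, p.2 + ((s * t : ℝ) : AddCircle (1 : ℝ)))) := by
  classical
  have hvol : (haarAddCircle : Measure (AddCircle (1:ℝ))) = volume := by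
    rw [AddCircle.volume_eq_smul_haarAddCircle]
    simp
  haveI hPν : IsProbabilityMeasure (volume : Measure (AddCircle (1:ℝ))) :=
    hvol ▸ inferInstanceAs (IsProbabilityMeasure (haarAddCircle : Measure (AddCircle (1:ℝ))))
  have hcount : (Eig μ φ).Countable := eig_countable μ φ hφpres
  have hbad : ∀ᵐ s ∂(volume : Measure ℝ), ∀ n : ℤ, n ≠ 0 → -(n:ℝ) * s ∉ Eig μ φ := by
    rw [ae_iff]
    have hsub : {s : ℝ | ¬ ∀ n : ℤ, n ≠ 0 → -(n:ℝ) * s ∉ Eig μ φ} ⊆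
        ⋃ n : ℤ, {s : ℝ | n ≠ 0 ∧ -(n:ℝ) * s ∈ Eig μ φ} := by
      intro s hs2
      push_neg at hs2
      obtain ⟨n, hn, hmem⟩ := hs2
      exact Set.mem_iUnion.mpr ⟨n, hn, hmem⟩
    refine measure_mono_null hsub (measure_iUnion_null fun n => ?_)
    by_cases hn : n = 0
    · simp [hn]
    · have himg : {s : ℝ | n ≠ 0 ∧ -(n:ℝ) * s ∈ Eig μ φ} ⊆
          (fun e => e / (-(n:ℝ))) '' (Eig μ φ) := by
        intro s hs2
        refine ⟨-(n:ℝ) * s, hs2.2, ?_⟩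
        have : (n:ℝ) ≠ 0 := Int.cast_ne_zero.mpr hn
        field_simp
      exact measure_mono_null himg ((hcount.image _).measure_zero _)
  filter_upwards [hbad] with s hs
  intro A hA hAinv
  set ind : X × AddCircle (1:ℝ) → ℂ := Set.indicator A (fun _ => (1:ℂ)) with hind
  have hindmeas : Measurable ind := measurable_const.indicator hA
  have hindnorm : ∀ p, ‖ind p‖ ≤ 1 := by
    intro p
    rw [hind, Set.indicator_apply]
    split_ifs <;> simp
  set c : ℤ → X → ℂ := fun n x => fourierCoeff (fun r => ind (x, r)) n with hc
  have hcdef : ∀ (n : ℤ) (x : X),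
      c n x = ∫ r, fourier (-n) r • ind (x, r) ∂haarAddCircle := fun n x => rfl
  have hcm : ∀ n : ℤ, Measurable (c n) := by
    intro n
    have h1 : StronglyMeasurable (fun p : X × AddCircle (1:ℝ) => fourier (-n) p.2 • ind p) :=
      (((fourier (-n)).continuous.measurable.comp measurable_snd).smul hindmeas).stronglyMeasurable
    exact h1.integral_prod_right'.measurable
  have hbound : ∀ (n : ℤ) (x : X), ‖c n x‖ ≤ 1 := by
    intro n x
    rw [hcdef]
    calc ‖∫ r, fourier (-n) r • ind (x, r) ∂haarAddCircle‖
        ≤ 1 * ((haarAddCircle : Measure (AddCircle (1:ℝ))) Set.univ).toReal := by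
          apply norm_integral_le_of_norm_le_const
          refine ae_of_all _ fun r => ?_
          rw [norm_smul, norm_fourier_eq_one, one_mul]
          exact hindnorm _
      _ = 1 := by simp
  have hmem : ∀ n : ℤ, MemLp (c n) 2 μ := fun n =>
    MemLp.of_bound (hcm n).aestronglyMeasurable 1 (ae_of_all _ (hbound n))
  have hrel : ∀ (n : ℤ) (t : ℝ), (fun x => c n (φ t x)) =ᵐ[μ]
      fun x => fourier (-n) (((s * t : ℝ)) : AddCircle (1:ℝ)) * c n x := by
    intro n t
    set a : AddCircle (1:ℝ) := ((s * t : ℝ) : AddCircle (1:ℝ)) with ha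
    have h1 : ∀ᵐ p ∂(μ.prod (volume : Measure (AddCircle (1:ℝ)))),
        ((φ t p.1, p.2 + a) ∈ A ↔ p ∈ A) := by
      have h0 := Filter.eventuallyEq_set.mp (hAinv t)
      filter_upwards [h0] with p hp
      exact hp
    have h2 := Measure.ae_ae_of_ae_prod h1
    filter_upwards [h2] with x hx
    have hx' : ∀ᵐ r ∂(haarAddCircle : Measure (AddCircle (1:ℝ))),
        ((φ t x, r + a) ∈ A ↔ (x, r) ∈ A) := by rw [hvol]; exact hx
    calc c n (φ t x) = ∫ r, fourier (-n) r • ind (φ t x, r) ∂haarAddCircle := hcdef n _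
      _ = ∫ r, fourier (-n) (r + a) • ind (φ t x, r + a) ∂haarAddCircle :=
          (integral_add_right_eq_self (fun r => fourier (-n) r • ind (φ t x, r)) a).symm
      _ = ∫ r, fourier (-n) a * (fourier (-n) r • ind (x, r)) ∂haarAddCircle := by
          apply integral_congr_ae
          filter_upwards [hx'] with r hr
          rw [fourier_arg_add, hind]
          simp only [smul_eq_mul, Set.indicator_apply]
          rw [if_congr hr rfl rfl]
          ring
      _ = fourier (-n) a * c n x := by rw [integral_const_mul, hcdef]
  have hfour_exp : ∀ (n : ℤ) (t : ℝ), (fourier (-n) (((s*t:ℝ)) : AddCircle (1:ℝ)) : ℂ)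
      = Complex.exp (2 * (Real.pi : ℂ) * ((-(n:ℝ) * s : ℝ) : ℂ) * (t:ℂ) * Complex.I) := by
    intro n t
    rw [fourier_coe_apply]
    congr 1
    push_cast
    field_simp
  have hzero : ∀ n : ℤ, n ≠ 0 → c n =ᵐ[μ] 0 := by
    intro n hn
    by_contra hne
    refine hs n hn ⟨c n, hmem n, hne, fun t => ?_⟩
    filter_upwards [hrel n t] with x hx
    rw [hx, hfour_exp n t]
  have h00 : ∀ t : ℝ, (fun x => c 0 (φ t x)) =ᵐ[μ] fun x => c 0 x := by
    intro t
    filter_upwards [hrel 0 t] with x hx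
    rw [hx]
    simp [neg_zero, fourier_zero]
  have hinvset : ∀ (g : X → ℝ), Measurable g → (∀ t, (fun x => g (φ t x)) =ᵐ[μ] g) →
      ∃ κ : ℝ, g =ᵐ[μ] fun _ => κ := by
    intro g hg hginv
    apply aux_const μ g hg
    intro a
    apply herg _ (measurableSet_lt measurable_const hg)
    intro t
    have hpre : φ t ⁻¹' {x | a < g x} = {x | a < g (φ t x)} := rfl
    rw [hpre]
    apply Filter.eventuallyEq_set.mpr
    filter_upwards [hginv t] with x hx
    simp only [Set.mem_setOf_eq, hx]
  obtain ⟨κr, hκr⟩ := hinvset (fun x => (c 0 x).re) (Complex.measurable_re.comp (hcm 0))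
    (fun t => by filter_upwards [h00 t] with x hx; simp [hx])
  obtain ⟨κi, hκi⟩ := hinvset (fun x => (c 0 x).im) (Complex.measurable_im.comp (hcm 0))
    (fun t => by filter_upwards [h00 t] with x hx; simp [hx])
  set κ : ℂ := ⟨κr, κi⟩ with hκ
  have hκconst : c 0 =ᵐ[μ] fun _ => κ := by
    filter_upwards [hκr, hκi] with x h1 h2
    exact Complex.ext h1 h2
  have hslice_meas : ∀ x, Measurable (fun r => ind (x, r)) :=
    fun x => hindmeas.comp measurable_prodMk_left
  have hconstcoeff : ∀ n : ℤ, fourierCoeff (fun _ : AddCircle (1:ℝ) => κ) n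
      = if n = 0 then κ else 0 := by
    intro n
    rw [fourierCoeff]
    split_ifs with h
    · subst h
      simp [neg_zero, fourier_zero, integral_const]
    · rw [integral_smul_const, integral_fourier_eq_zero (-n) (neg_ne_zero.mpr h)]
      simp
  have hmain : ∀ᵐ x ∂μ, (fun r => ind (x, r)) =ᵐ[(volume : Measure (AddCircle (1:ℝ)))]
      fun _ => κ := by
    have hall : ∀ᵐ x ∂μ, (∀ n : ℤ, n ≠ 0 → c n x = 0) ∧ c 0 x = κ := by
      refine Filter.Eventually.and ?_ hκconst
      rw [MeasureTheory.ae_all_iff]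
      intro n
      by_cases hn : n = 0
      · exact ae_of_all _ fun x h => (h hn).elim
      · filter_upwards [hzero n hn] with x hx
        intro _
        exact hx
    filter_upwards [hall] with x hx
    obtain ⟨hx1, hx2⟩ := hx
    set u : AddCircle (1:ℝ) → ℂ := fun r => ind (x, r) - κ with hu
    have humem : MemLp u 2 (haarAddCircle : Measure (AddCircle (1:ℝ))) := by
      apply MemLp.of_bound ((hslice_meas x).sub measurable_const).aestronglyMeasurable (1 + ‖κ‖)
      refine ae_of_all _ fun r => ?_
      calc ‖ind (x, r) - κ‖ ≤ ‖ind (x,r)‖ + ‖κ‖ := norm_sub_le _ _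
        _ ≤ 1 + ‖κ‖ := by linarith [hindnorm (x, r)]
    have hint1 : ∀ n : ℤ, Integrable (fun r => fourier (-n) r • ind (x, r))
        (haarAddCircle : Measure (AddCircle (1:ℝ))) := by
      intro n
      apply memLp_one_iff_integrable.mp
      apply MemLp.of_bound
        (((fourier (-n)).continuous.measurable.smul (hslice_meas x)).aestronglyMeasurable) 1
      refine ae_of_all _ fun r => ?_
      rw [Pi.smul_apply', norm_smul, norm_fourier_eq_one, one_mul]
      exact hindnorm _
    have hint2 : ∀ n : ℤ, Integrable (fun r : AddCircle (1:ℝ) => fourier (-n) r • κ)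
        (haarAddCircle : Measure (AddCircle (1:ℝ))) := by
      intro n
      apply memLp_one_iff_integrable.mp
      apply MemLp.of_bound
        ((fourier (-n)).continuous.measurable.smul measurable_const).aestronglyMeasurable ‖κ‖
      refine ae_of_all _ fun r => ?_
      rw [Pi.smul_apply', norm_smul, norm_fourier_eq_one, one_mul]
    have hcoeff : ∀ n : ℤ, fourierCoeff u n = 0 := by
      intro n
      have hsplit : fourierCoeff u n = c n x - fourierCoeff (fun _ : AddCircle (1:ℝ) => κ) n := by
        rw [fourierCoeff, fourierCoeff, hcdef]
        rw [show (fun t : AddCircle (1:ℝ) => fourier (-n) t • u t)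
          = fun t => fourier (-n) t • ind (x, t) - fourier (-n) t • κ from
          funext fun t => smul_sub _ _ _]
        rw [integral_sub (hint1 n) (hint2 n)]
      rw [hsplit, hconstcoeff]
      by_cases hn : n = 0
      · subst hn; simp [hx2]
      · simp only [hn, if_false, hx1 n hn, sub_zero]
    have hU : fourierBasis.repr (humem.toLp u) = 0 := by
      ext n
      rw [fourierBasis_repr]
      have hcongr : fourierCoeff
          ((humem.toLp u : Lp ℂ 2 (haarAddCircle : Measure (AddCircle (1:ℝ))))
            : AddCircle (1:ℝ) → ℂ) n = fourierCoeff u n := by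
        apply integral_congr_ae
        filter_upwards [humem.coeFn_toLp] with r hr
        rw [hr]
      rw [hcongr, hcoeff n]
      simp
    have hU0 : humem.toLp u = 0 := fourierBasis.repr.map_eq_zero_iff.mp hU
    have hu0 : u =ᵐ[(haarAddCircle : Measure (AddCircle (1:ℝ)))] 0 := by
      have h1 := humem.coeFn_toLp
      rw [hU0] at h1
      exact h1.symm.trans (Lp.coeFn_zero ℂ 2 _)
    rw [← hvol]
    filter_upwards [hu0] with r hr
    exact sub_eq_zero.mp hr
  have hone0 : κ = 0 ∨ κ = 1 := by
    obtain ⟨x, hx⟩ := hmain.exists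
    obtain ⟨r, hr⟩ := hx.exists
    have hval : ind (x, r) = κ := hr
    by_cases hmemA : (x, r) ∈ A
    · right; rw [← hval, hind]; exact Set.indicator_of_mem hmemA _
    · left; rw [← hval, hind]; exact Set.indicator_of_notMem hmemA _
  have hprod : (μ.prod (volume : Measure (AddCircle (1:ℝ)))) A
      = ∫⁻ x, (volume : Measure (AddCircle (1:ℝ))) (Prod.mk x ⁻¹' A) ∂μ :=
    Measure.prod_apply hA
  rcases hone0 with h0 | h1
  · left
    rw [hprod]
    have hz : ∀ᵐ x ∂μ, (volume : Measure (AddCircle (1:ℝ))) (Prod.mk x ⁻¹' A) = 0 := by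
      filter_upwards [hmain] with x hx
      rw [h0] at hx
      have hnull : (volume : Measure (AddCircle (1:ℝ))) {r | ¬ (ind (x, r) = 0)} = 0 :=
        ae_iff.mp hx
      apply measure_mono_null ?_ hnull
      intro r hrA
      simp only [Set.mem_setOf_eq, hind, Set.indicator_apply]
      simp [Set.mem_preimage.mp hrA]
    rw [lintegral_congr_ae hz, lintegral_zero]
  · right
    rw [hprod]
    have ho : ∀ᵐ x ∂μ, (volume : Measure (AddCircle (1:ℝ))) (Prod.mk x ⁻¹' A) = 1 := by
      filter_upwards [hmain] with x hx
      rw [h1] at hx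
      have hnull : (volume : Measure (AddCircle (1:ℝ))) {r | ¬ (ind (x, r) = 1)} = 0 :=
        ae_iff.mp hx
      have hcompl : (Prod.mk x ⁻¹' A)ᶜ ⊆ {r | ¬ (ind (x, r) = 1)} := by
        intro r hrA
        simp only [Set.mem_compl_iff, Set.mem_preimage] at hrA
        simp [hind, Set.indicator_apply, hrA]
      have h2 : (volume : Measure (AddCircle (1:ℝ))) (Prod.mk x ⁻¹' A)ᶜ = 0 :=
        measure_mono_null hcompl hnull
      exact (prob_compl_eq_zero_iff (measurable_prodMk_left hA)).mp h2
    rw [lintegral_congr_ae ho]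
    simp

end Main
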